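/- Let A be a symmetric n×n real nonnegative matrix with positive row sums d_i, D = diag(d_i), P = A D^{-1}, α ∈ (0,1), and v a stochastic vector. Let x solve (I − αP)x = (1−α)v. Suppose ŷ is a vector whose residual r = D^{-1}v − (I − αPᵀ)ŷ satisfies ‖r‖∞ < ε, and set x̂ = (1−α)D ŷ. Then ‖D^{-1}(x − x̂)‖∞ < ε, i.e., |x_j − x̂_j| < ε d_j for every j. -/

import Mathlib

open Matrix

theorem push_accuracy_bound {n : ℕ} (A : Matrix (Fin n) (Fin n) ℝ)
    (hAsymm : A.IsSymm) (hA0 : ∀ i j, 0 ≤ A i j)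
    (d : Fin n → ℝ) (hd : ∀ i, d i = ∑ j, A i j) (hdpos : ∀ i, 0 < d i)
    (α : ℝ) (hα0 : 0 < α) (hα1 : α < 1)
    (v : Fin n → ℝ) (hv0 : ∀ i, 0 ≤ v i) (hv1 : ∑ i, v i = 1)
    (x : Fin n → ℝ)
    (hx : (1 - α • (A * diagonal fun i => (d i)⁻¹)) *ᵥ x = (1 - α) • v)
    (yhat : Fin n → ℝ) (ε : ℝ) (r : Fin n → ℝ)
    (hr : r = (diagonal fun i => (d i)⁻¹) *ᵥ v -
      (1 - α • (A * diagonal fun i => (d i)⁻¹)ᵀ) *ᵥ yhat)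
    (hrε : ‖r‖ < ε)
    (xhat : Fin n → ℝ) (hxhat : xhat = (1 - α) • (diagonal d *ᵥ yhat)) :
    ‖(diagonal fun i => (d i)⁻¹) *ᵥ (x - xhat)‖ < ε ∧
    ∀ j, |x j - xhat j| < ε * d j := by
  have hdne : ∀ i, d i ≠ 0 := fun i => (hdpos i).ne'
  have hxc : ∀ i, x i - ∑ j, α * (A i j * ((d j)⁻¹ * x j)) = v i - α * v i := by
    intro i
    have := congrFun hx i
    simpa [sub_mulVec, smul_mulVec, mulVec, dotProduct, mul_apply,
      sub_mul, Finset.sum_sub_distrib, one_apply, Finset.sum_ite_eq, Finset.sum_mul,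
      mul_assoc, diagonal_apply] using this
  have hrc : ∀ i, r i = (d i)⁻¹ * v i -
      (yhat i - α * ∑ j, (d i)⁻¹ * (A j i * yhat j)) := by
    intro i
    have := congrFun hr i
    simpa [sub_mulVec, smul_mulVec, mulVec, dotProduct, mul_apply, transpose_apply,
      sub_mul, Finset.sum_sub_distrib, one_apply, Finset.sum_ite_eq, Finset.sum_mul,
      mul_assoc, diagonal_apply, mulVec_diagonal] using this
  have hxhatc : ∀ j, xhat j = (1 - α) * (d j * yhat j) := by
    intro j
    simp [hxhat, mulVec_diagonal]
  set w : Fin n → ℝ := (diagonal fun i => (d i)⁻¹) *ᵥ (x - xhat) with hwdef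
  have wc : ∀ i, w i = (d i)⁻¹ * (x i - xhat i) := by
    intro i; simp [hwdef, mulVec_diagonal]
  have hw : ∀ i, w i = α * ∑ j, A j i * (d i)⁻¹ * w j + (1 - α) * r i := by
    intro i
    have hsplit : ∑ j, A j i * (d i)⁻¹ * w j =
        (d i)⁻¹ * (∑ j, A i j * ((d j)⁻¹ * x j)) -
          (1 - α) * ((d i)⁻¹ * ∑ j, A i j * yhat j) := by
      simp only [Finset.mul_sum]
      rw [← Finset.sum_sub_distrib]
      refine Finset.sum_congr rfl fun j _ => ?_
      rw [wc j, hxhatc j, hAsymm.apply i j]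
      field_simp [hdne i, hdne j]
    have hsum2 : ∑ j, (d i)⁻¹ * (A j i * yhat j) = (d i)⁻¹ * ∑ j, A i j * yhat j := by
      rw [Finset.mul_sum]
      exact Finset.sum_congr rfl fun j _ => by rw [hAsymm.apply i j]
    have hS : α * ∑ j, A i j * ((d j)⁻¹ * x j) = x i - (1 - α) * v i := by
      have h := hxc i
      rw [← Finset.mul_sum] at h
      linarith
    have hcancel : (d i)⁻¹ * d i = 1 := inv_mul_cancel₀ (hdne i)
    rw [hsplit, hrc i, hsum2, wc i, hxhatc i]
    linear_combination (-(d i)⁻¹) * hS - (1 - α) * yhat i * hcancel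
  have hrow : ∀ i, ∑ j, A j i * (d i)⁻¹ = 1 := by
    intro i
    have h : ∑ j, A j i = d i := by
      rw [hd i]; exact Finset.sum_congr rfl fun j _ => hAsymm.apply i j
    rw [← Finset.sum_mul, h, mul_inv_cancel₀ (hdne i)]
  have hPw : ∀ i, |∑ j, A j i * (d i)⁻¹ * w j| ≤ ‖w‖ := by
    intro i
    calc |∑ j, A j i * (d i)⁻¹ * w j| ≤ ∑ j, |A j i * (d i)⁻¹ * w j| :=
          Finset.abs_sum_le_sum_abs _ _
      _ ≤ ∑ j, A j i * (d i)⁻¹ * ‖w‖ := by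
          refine Finset.sum_le_sum fun j _ => ?_
          have h1 : 0 ≤ A j i * (d i)⁻¹ := mul_nonneg (hA0 j i) (inv_nonneg.2 (hdpos i).le)
          rw [abs_mul, abs_of_nonneg h1]
          exact mul_le_mul_of_nonneg_left (norm_le_pi_norm w j) h1
      _ = ‖w‖ := by rw [← Finset.sum_mul, hrow i, one_mul]
  have hrb : ∀ i, |r i| ≤ ‖r‖ := fun i => norm_le_pi_norm r i
  have hwr : ‖w‖ ≤ ‖r‖ := by
    have hC : (0:ℝ) ≤ α * ‖w‖ + (1 - α) * ‖r‖ :=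
      add_nonneg (mul_nonneg hα0.le (norm_nonneg _))
        (mul_nonneg (by linarith) (norm_nonneg _))
    have hb : ‖w‖ ≤ α * ‖w‖ + (1 - α) * ‖r‖ := by
      refine (pi_norm_le_iff_of_nonneg hC).2 fun i => ?_
      rw [Real.norm_eq_abs, hw i]
      calc |α * ∑ j, A j i * (d i)⁻¹ * w j + (1 - α) * r i|
          ≤ |α * ∑ j, A j i * (d i)⁻¹ * w j| + |(1 - α) * r i| := abs_add_le _ _
        _ ≤ α * ‖w‖ + (1 - α) * ‖r‖ := by
            rw [abs_mul, abs_mul, abs_of_nonneg hα0.le,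
              abs_of_nonneg (by linarith : (0:ℝ) ≤ 1 - α)]
            exact add_le_add (mul_le_mul_of_nonneg_left (hPw i) hα0.le)
              (mul_le_mul_of_nonneg_left (hrb i) (by linarith))
    nlinarith [norm_nonneg w, norm_nonneg r]
  have hwε : ‖w‖ < ε := lt_of_le_of_lt hwr hrε
  refine ⟨hwε, fun j => ?_⟩
  have h1 : |w j| < ε := lt_of_le_of_lt (by simpa using norm_le_pi_norm w j) hwε
  have h2 : x j - xhat j = d j * w j := by
    rw [wc j, ← mul_assoc, mul_inv_cancel₀ (hdne j), one_mul]
  rw [h2, abs_mul, abs_of_pos (hdpos j)]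
  calc d j * |w j| < d j * ε := (mul_lt_mul_iff_right₀ (hdpos j)).2 h1
    _ = ε * d j := mul_comm _ _
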